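/- Let $d\ge 1$ and let $x_1\ge\cdots\ge x_d>0$ and $y_1\ge\cdots\ge y_d>0$ be real numbers such that $\prod_{i=1}^l x_i \ge \prod_{i=1}^l y_i$ for every $1\le l\le d$. Then $\sum_{i=1}^d x_i \ge \sum_{i=1}^d y_i$. -/

import Mathlib

open Finset

lemma abel_aux (c t : ℕ → ℝ) (hcm : ∀ i, c (i+1) ≤ c i)
    (hT : ∀ l, 0 ≤ ∑ i ∈ Finset.range l, t i) :
    ∀ n, c n * ∑ i ∈ Finset.range n, t i ≤ ∑ i ∈ Finset.range n, c i * t i := by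
  intro n
  induction n with
  | zero => simp
  | succ n ih =>
    rw [Finset.sum_range_succ, Finset.sum_range_succ]
    have h1 := hT (n+1)
    rw [Finset.sum_range_succ] at h1
    have h2 := hcm n
    nlinarith [ih]

theorem stmt_6 (d : ℕ) (hd : 1 ≤ d) (x y : ℕ → ℝ)
    (hxpos : ∀ i, 1 ≤ i → i ≤ d → 0 < x i)
    (hypos : ∀ i, 1 ≤ i → i ≤ d → 0 < y i)
    (hxmono : ∀ i j, 1 ≤ i → i ≤ j → j ≤ d → x j ≤ x i)
    (hymono : ∀ i j, 1 ≤ i → i ≤ j → j ≤ d → y j ≤ y i)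
    (hprod : ∀ l, 1 ≤ l → l ≤ d →
      ∏ i ∈ Finset.Icc 1 l, y i ≤ ∏ i ∈ Finset.Icc 1 l, x i) :
    ∑ i ∈ Finset.Icc 1 d, y i ≤ ∑ i ∈ Finset.Icc 1 d, x i := by
  set c : ℕ → ℝ := fun i => y (min (i+1) d) with hc
  set t : ℕ → ℝ := fun i => if i < d then Real.log (x (i+1) / y (i+1)) else 0 with ht
  have hcm : ∀ i, c (i+1) ≤ c i := by
    intro i
    apply hymono
    · simp [le_min_iff]; omega
    · apply min_le_min (by omega) le_rfl
    · exact min_le_right _ _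
  -- partial sums of t over range l equal log of product ratio, nonnegative
  have hTd : ∀ l, l ≤ d → 0 ≤ ∑ i ∈ Finset.range l, t i := by
    intro l hl
    have key : ∀ i ∈ Finset.range l, t i = Real.log (x (i+1) / y (i+1)) := by
      intro i hi
      simp only [Finset.mem_range] at hi
      simp [ht, show i < d by omega]
    rw [Finset.sum_congr rfl key]
    rcases Nat.eq_zero_or_pos l with rfl | hl1
    · simp
    have hlog : ∑ i ∈ Finset.range l, Real.log (x (i+1) / y (i+1)) =
        Real.log (∏ i ∈ Finset.range l, (x (i+1) / y (i+1))) := by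
      rw [Real.log_prod]
      intro i hi
      simp only [Finset.mem_range] at hi
      have hx := hxpos (i+1) (by omega) (by omega)
      have hy := hypos (i+1) (by omega) (by omega)
      positivity
    rw [hlog]
    apply Real.log_nonneg
    have hxp : ∏ i ∈ Finset.range l, x (i+1) = ∏ i ∈ Finset.Icc 1 l, x i := by
      rw [← Finset.Ico_add_one_right_eq_Icc, Finset.prod_Ico_eq_prod_range]
      simp [add_comm]
    have hyp : ∏ i ∈ Finset.range l, y (i+1) = ∏ i ∈ Finset.Icc 1 l, y i := by
      rw [← Finset.Ico_add_one_right_eq_Icc, Finset.prod_Ico_eq_prod_range]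
      simp [add_comm]
    rw [Finset.prod_div_distrib, hxp, hyp]
    have hy0 : 0 < ∏ i ∈ Finset.Icc 1 l, y i := by
      apply Finset.prod_pos
      intro i hi
      simp only [Finset.mem_Icc] at hi
      exact hypos i hi.1 (by omega)
    rw [le_div_iff₀ hy0, one_mul]
    exact hprod l hl1 hl
  have hT : ∀ l, 0 ≤ ∑ i ∈ Finset.range l, t i := by
    intro l
    rcases le_or_gt l d with h | h
    · exact hTd l h
    · have : ∑ i ∈ Finset.range l, t i = ∑ i ∈ Finset.range d, t i := by
        symm
        apply Finset.sum_subset (Finset.range_subset_range.mpr (le_of_lt h))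
        intro i _ hi
        simp only [Finset.mem_range, not_lt] at hi
        simp [ht, show ¬ i < d by omega]
      rw [this]
      exact hTd d le_rfl
  have habel := abel_aux c t hcm hT d
  have hcd : 0 ≤ c d := by
    have := hypos (min (d+1) d) (by simp [le_min_iff]; omega) (min_le_right _ _)
    exact le_of_lt this
  have hS : 0 ≤ ∑ i ∈ Finset.range d, c i * t i := by
    have := mul_nonneg hcd (hT d)
    linarith
  -- termwise convexity bound
  have hterm : ∀ i ∈ Finset.range d, c i * t i ≤ x (i+1) - y (i+1) := by
    intro i hi
    simp only [Finset.mem_range] at hi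
    have hx := hxpos (i+1) (by omega) (by omega)
    have hy := hypos (i+1) (by omega) (by omega)
    have hci : c i = y (i+1) := by simp [hc, Nat.min_eq_left (by omega : i+1 ≤ d)]
    have hti : t i = Real.log (x (i+1) / y (i+1)) := by simp [ht, hi]
    rw [hci, hti]
    have hlog : Real.log (x (i+1) / y (i+1)) ≤ x (i+1) / y (i+1) - 1 :=
      Real.log_le_sub_one_of_pos (by positivity)
    have := mul_le_mul_of_nonneg_left hlog (le_of_lt hy)
    calc y (i+1) * Real.log (x (i+1) / y (i+1)) ≤ y (i+1) * (x (i+1) / y (i+1) - 1) := this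
      _ = x (i+1) - y (i+1) := by field_simp
  have hsum : 0 ≤ ∑ i ∈ Finset.range d, (x (i+1) - y (i+1)) :=
    le_trans hS (Finset.sum_le_sum hterm)
  rw [Finset.sum_sub_distrib] at hsum
  have hxs : ∑ i ∈ Finset.range d, x (i+1) = ∑ i ∈ Finset.Icc 1 d, x i := by
    rw [← Finset.Ico_add_one_right_eq_Icc, Finset.sum_Ico_eq_sum_range]; simp [add_comm]
  have hys : ∑ i ∈ Finset.range d, y (i+1) = ∑ i ∈ Finset.Icc 1 d, y i := by
    rw [← Finset.Ico_add_one_right_eq_Icc, Finset.sum_Ico_eq_sum_range]; simp [add_comm]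
  linarith [hsum, hxs ▸ hys ▸ hsum]
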